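/- Assume (AU) with bound N, let ((l, s), v) be a soliton of u at level v (case C1), and set k = v. Then: (a) there exists Φ¹ : ℤ → ℝ satisfying the γ-fundamental relations at l, any two such functions differ by an additive constant, and every such Φ¹ solves the γ-eigenproblem and satisfies (AΦ); (b) there exists Φ² : ℤ → ℝ satisfying the δ-fundamental relations at (l, s), any two such differ by an additive constant, and every such Φ² solves the δ-eigenproblem and satisfies (AΦ). Moreover in this case the relations evaluate to: Φ¹ i − Φ¹ (i+1) = u i − k for all i ≤ l; Φ¹ (i+1) − Φ¹ i = u (i+1) for all i ≥ l; Φ² i − Φ² (i+1) = u (i−1) − k for all i ≤ l+s−1; Φ² (i+1) − Φ² i = u i for all i ≥ l+s. -/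

import Mathlib

/-- `γ i = min (u i) (1 - u (i-1))`. -/
noncomputable def gam (u : ℤ → ℝ) (i : ℤ) : ℝ := min (u i) (1 - u (i - 1))

/-- `δ i = min (u (i-1)) (1 - u i)`. -/
noncomputable def del (u : ℤ → ℝ) (i : ℤ) : ℝ := min (u (i - 1)) (1 - u i)

/-- `Φ` solves the γ-eigenproblem. -/
def SolvesG (u : ℤ → ℝ) (k : ℝ) (Φ : ℤ → ℝ) : Prop :=
  ∀ i : ℤ, max (Φ (i + 1) + gam u i - k) (Φ (i - 1) + gam u i) = Φ i

/-- `Φ` solves the δ-eigenproblem. -/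
def SolvesD (u : ℤ → ℝ) (k : ℝ) (Φ : ℤ → ℝ) : Prop :=
  ∀ i : ℤ, max (Φ (i + 1) + del u i - k) (Φ (i - 1) + del u i) = Φ i

/-- Condition (AΦ). -/
def APhi (k : ℝ) (Φ : ℤ → ℝ) : Prop :=
  ∀ M : ℤ, (∃ N' : ℤ, M ≤ N' ∧ Φ (N' + 1) = Φ N') ∧
    (∃ N'' : ℤ, M ≤ N'' ∧ Φ (-N'' - 1) = Φ (-N'') - k)


/-- A soliton of `u` at level `v` (case C1). -/
def SolitonC1 (u : ℤ → ℝ) (l : ℤ) (s : ℕ) (v : ℝ) : Prop :=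
  1 ≤ s ∧ (∀ i : ℤ, u i + u (i + 1) ≤ v) ∧ v ≤ 1 ∧
  (∀ i : ℤ, l ≤ i → i ≤ l + (s : ℤ) - 1 → u i + u (i + 1) = v) ∧
  u (l - 1) + u l < v ∧ u (l + (s : ℤ)) + u (l + (s : ℤ) + 1) < v

/-- A soliton of `u` (case C2). -/
def SolitonC2 (u : ℤ → ℝ) (l : ℤ) (s : ℕ) : Prop :=
  1 ≤ s ∧ (∀ i : ℤ, l ≤ i → i ≤ l + (s : ℤ) - 1 → 1 ≤ u i + u (i + 1)) ∧
  u (l - 1) + u l < 1 ∧ u (l + (s : ℤ)) + u (l + (s : ℤ) + 1) < 1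

/-- `Φ` satisfies the γ-fundamental relations at `l`. -/
def FundG (u : ℤ → ℝ) (k : ℝ) (l : ℤ) (Φ : ℤ → ℝ) : Prop :=
  (∀ i : ℤ, i ≤ l → Φ i - Φ (i + 1) = gam u i - k) ∧
  (∀ i : ℤ, l ≤ i → Φ (i + 1) - Φ i = gam u (i + 1))

/-- `Φ` satisfies the δ-fundamental relations at `(l, s)`. -/
def FundD (u : ℤ → ℝ) (k : ℝ) (l : ℤ) (s : ℕ) (Φ : ℤ → ℝ) : Prop :=
  (∀ i : ℤ, i ≤ l + (s : ℤ) - 1 → Φ i - Φ (i + 1) = del u i - k) ∧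
  (∀ i : ℤ, l + (s : ℤ) ≤ i → Φ (i + 1) - Φ i = del u (i + 1))

noncomputable def cum (g : ℤ → ℝ) (i : ℤ) : ℝ :=
  if 0 ≤ i then ∑ j ∈ Finset.Icc (0:ℤ) (i-1), g j else -∑ j ∈ Finset.Icc i (-1:ℤ), g j

lemma cum_succ (g : ℤ → ℝ) (i : ℤ) : cum g (i+1) = cum g i + g i := by
  unfold cum
  rcases le_or_gt 0 i with hi | hi
  · rw [if_pos hi, if_pos (by omega : (0:ℤ) ≤ i + 1)]
    have h1 : Finset.Icc (0:ℤ) (i+1-1) = insert i (Finset.Icc 0 (i-1)) := by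
      ext x; simp only [Finset.mem_Icc, Finset.mem_insert]; omega
    rw [h1, Finset.sum_insert (by simp only [Finset.mem_Icc, not_and, not_le]; omega)]
    ring
  · rcases eq_or_lt_of_le (by omega : i + 1 ≤ 0) with h0 | h0
    · have : i = -1 := by omega
      subst this
      norm_num
    · rw [if_neg (by omega), if_neg (by omega)]
      have h1 : Finset.Icc i (-1:ℤ) = insert i (Finset.Icc (i+1) (-1)) := by
        ext x; simp only [Finset.mem_Icc, Finset.mem_insert]; omega
      rw [h1, Finset.sum_insert (by simp only [Finset.mem_Icc, not_and, not_le]; omega)]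
      ring

lemma const_of_step (d : ℤ → ℝ) (h : ∀ i, d (i+1) = d i) : ∀ i, d i = d 0 := by
  intro i
  induction i using Int.induction_on with
  | zero => rfl
  | succ n ih => rw [h n, ih]
  | pred n ih =>
    have h2 := h (-(n:ℤ) - 1)
    rw [show -(n:ℤ) - 1 + 1 = -(n:ℤ) from by ring] at h2
    rw [← h2, ih]

/-- Case C1. For a soliton `((l, s), v)` of `u` with `k = v`: the γ- and
δ-fundamental eigenvectors exist, are unique up to an additive constant, solve the respective
eigenproblems and satisfy (AΦ); moreover the fundamental relations evaluate explicitly in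
terms of `u`. -/
theorem stmt_10 (u : ℤ → ℝ) (hu : ∀ i : ℤ, 0 ≤ u i ∧ u i ≤ 1)
    (N : ℕ) (hN : 0 < N) (hAU : ∀ i : ℤ, ((N : ℤ) ≤ i ∨ i ≤ -(N : ℤ)) → u i = 0)
    (l : ℤ) (s : ℕ) (v : ℝ) (hsol : SolitonC1 u l s v) (k : ℝ) (hk : k = v) :
    ((∃ Φ : ℤ → ℝ, FundG u k l Φ) ∧
     (∀ Φ Ψ : ℤ → ℝ, FundG u k l Φ → FundG u k l Ψ → ∃ c : ℝ, ∀ i : ℤ, Φ i = Ψ i + c) ∧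
     (∀ Φ : ℤ → ℝ, FundG u k l Φ → SolvesG u k Φ ∧ APhi k Φ)) ∧
    ((∃ Φ : ℤ → ℝ, FundD u k l s Φ) ∧
     (∀ Φ Ψ : ℤ → ℝ, FundD u k l s Φ → FundD u k l s Ψ → ∃ c : ℝ, ∀ i : ℤ, Φ i = Ψ i + c) ∧
     (∀ Φ : ℤ → ℝ, FundD u k l s Φ → SolvesD u k Φ ∧ APhi k Φ)) ∧
    (∀ Φ : ℤ → ℝ, FundG u k l Φ →
      (∀ i : ℤ, i ≤ l → Φ i - Φ (i + 1) = u i - k) ∧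
      (∀ i : ℤ, l ≤ i → Φ (i + 1) - Φ i = u (i + 1))) ∧
    (∀ Φ : ℤ → ℝ, FundD u k l s Φ →
      (∀ i : ℤ, i ≤ l + (s : ℤ) - 1 → Φ i - Φ (i + 1) = u (i - 1) - k) ∧
      (∀ i : ℤ, l + (s : ℤ) ≤ i → Φ (i + 1) - Φ i = u i)) := by
  obtain ⟨hs1, hbnd, hv1, heq, hl1, hr1⟩ := hsol
  subst hk
  -- basic consequences
  have hle : ∀ i : ℤ, u (i - 1) + u i ≤ k := by
    intro i; have h := hbnd (i-1); rwa [show i-1+1 = i from by ring] at h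
  have hg : ∀ i : ℤ, gam u i = u i := by
    intro i; unfold gam; exact min_eq_left (by have := hle i; linarith)
  have hd : ∀ i : ℤ, del u i = u (i - 1) := by
    intro i; unfold del; exact min_eq_left (by have := hle i; linarith)
  have hlk : u l + u (l+1) = k := heq l le_rfl (by omega)
  have hmk : u (l+(s:ℤ)-1) + u (l+(s:ℤ)) = k := by
    have h := heq (l+(s:ℤ)-1) (by omega) (by omega)
    rwa [show l+(s:ℤ)-1+1 = l+(s:ℤ) from by ring] at h
  -- existence G
  have hexG : ∃ Φ : ℤ → ℝ, FundG u k l Φ := by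
    refine ⟨cum (fun i => if l ≤ i then u (i+1) else k - u i), ?_, ?_⟩
    · intro i hi
      rw [hg, cum_succ]
      rcases eq_or_lt_of_le hi with h0 | h0
      · subst h0; rw [if_pos le_rfl]; linarith
      · rw [if_neg (by omega)]; ring
    · intro i hi
      rw [hg, cum_succ, if_pos hi]; ring
  -- existence D
  have hexD : ∃ Φ : ℤ → ℝ, FundD u k l s Φ := by
    refine ⟨cum (fun i => if (l+(s:ℤ)) ≤ i then u i else k - u (i-1)), ?_, ?_⟩
    · intro i hi
      rw [hd, cum_succ, if_neg (by omega)]; ring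
    · intro i hi
      rw [hd, cum_succ, if_pos hi, show i+1-1 = i from by ring]; ring
  -- uniqueness G
  have huniqG : ∀ Φ Ψ : ℤ → ℝ, FundG u k l Φ → FundG u k l Ψ →
      ∃ c : ℝ, ∀ i : ℤ, Φ i = Ψ i + c := by
    intro Φ Ψ hΦ hΨ
    have hstep : ∀ i : ℤ, (Φ (i+1) - Ψ (i+1)) = (Φ i - Ψ i) := by
      intro i
      rcases le_or_gt i l with hi | hi
      · have a := hΦ.1 i hi; have b := hΨ.1 i hi; linarith
      · have a := hΦ.2 i hi.le; have b := hΨ.2 i hi.le; linarith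
    refine ⟨Φ 0 - Ψ 0, fun i => ?_⟩
    have := const_of_step (fun i => Φ i - Ψ i) hstep i
    linarith
  -- uniqueness D
  have huniqD : ∀ Φ Ψ : ℤ → ℝ, FundD u k l s Φ → FundD u k l s Ψ →
      ∃ c : ℝ, ∀ i : ℤ, Φ i = Ψ i + c := by
    intro Φ Ψ hΦ hΨ
    have hstep : ∀ i : ℤ, (Φ (i+1) - Ψ (i+1)) = (Φ i - Ψ i) := by
      intro i
      rcases le_or_gt i ((l+(s:ℤ))-1) with hi | hi
      · have a := hΦ.1 i (by omega); have b := hΨ.1 i (by omega); linarith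
      · have a := hΦ.2 i (by omega); have b := hΨ.2 i (by omega); linarith
    refine ⟨Φ 0 - Ψ 0, fun i => ?_⟩
    have := const_of_step (fun i => Φ i - Ψ i) hstep i
    linarith
  -- solves + APhi for G
  have hsolG : ∀ Φ : ℤ → ℝ, FundG u k l Φ → SolvesG u k Φ ∧ APhi k Φ := by
    intro Φ hΦ
    obtain ⟨h1, h2⟩ := hΦ
    constructor
    · intro i
      rw [hg i]
      rcases le_or_gt i l with hi | hi
      · have e1 := h1 i hi
        have e2 := h1 (i-1) (by omega)
        rw [show i-1+1 = i from by ring] at e2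
        rw [hg i] at e1; rw [hg (i-1)] at e2
        have hb := hle i
        rw [max_eq_left (by linarith)]
        linarith
      · have e1 := h2 i hi.le
        have e2 := h2 (i-1) (by omega)
        rw [show i-1+1 = i from by ring] at e2
        rw [hg (i+1)] at e1; rw [hg i] at e2
        have hb := hbnd i
        rw [max_eq_right (by linarith)]
        linarith
    · intro M
      constructor
      · refine ⟨max M (max l N), le_max_left _ _, ?_⟩
        have e := h2 (max M (max l N)) (by omega)
        rw [hg] at e
        have hz : u (max M (max l N) + 1) = 0 := hAU _ (Or.inl (by omega))
        linarith
      · refine ⟨max M (max (N:ℤ) (-l-1)), le_max_left _ _, ?_⟩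
        have e := h1 (-(max M (max (N:ℤ) (-l-1))) - 1) (by omega)
        rw [show -(max M (max (N:ℤ) (-l-1))) - 1 + 1 = -(max M (max (N:ℤ) (-l-1)))
          from by ring] at e
        rw [hg] at e
        have hz : u (-(max M (max (N:ℤ) (-l-1))) - 1) = 0 := hAU _ (Or.inr (by omega))
        linarith
  -- solves + APhi for D
  have hsolD : ∀ Φ : ℤ → ℝ, FundD u k l s Φ → SolvesD u k Φ ∧ APhi k Φ := by
    intro Φ hΦ
    obtain ⟨h1, h2⟩ := hΦ
    constructor
    · intro i
      rw [hd i]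
      rcases lt_trichotomy i (l+(s:ℤ)) with hi | hi | hi
      · have e1 := h1 i (by omega)
        have e2 := h1 (i-1) (by omega)
        rw [show i-1+1 = i from by ring] at e2
        rw [hd i] at e1; rw [hd (i-1)] at e2
        have hb := hle (i-1)
        rw [max_eq_left (by linarith)]
        linarith
      · have hik : u (i - 1) + u i = k := by rw [hi]; exact hmk
        have e1 := h2 i (by omega)
        have e2 := h1 (i-1) (by omega)
        rw [show i-1+1 = i from by ring] at e2
        rw [hd (i+1), show i+1-1 = i from by ring] at e1
        rw [hd (i-1)] at e2
        have hb := hle (i-1)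
        rw [max_eq_left (by linarith [hik])]
        linarith [hik]
      · have e1 := h2 i (by omega)
        have e2 := h2 (i-1) (by omega)
        rw [show i-1+1 = i from by ring] at e2
        rw [hd (i+1), show i+1-1 = i from by ring] at e1
        rw [hd i] at e2
        have hb := hle i
        rw [max_eq_right (by linarith)]
        linarith
    · intro M
      constructor
      · refine ⟨max M (max (l+(s:ℤ)) N), le_max_left _ _, ?_⟩
        have e := h2 (max M (max (l+(s:ℤ)) N)) (by omega)
        rw [hd, show max M (max (l+(s:ℤ)) N) + 1 - 1 = max M (max (l+(s:ℤ)) N) from by ring] at e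
        have hz : u (max M (max (l+(s:ℤ)) N)) = 0 := hAU _ (Or.inl (by omega))
        linarith
      · refine ⟨max M (max (N:ℤ) (-(l+(s:ℤ)))), le_max_left _ _, ?_⟩
        have e := h1 (-(max M (max (N:ℤ) (-(l+(s:ℤ))))) - 1) (by omega)
        rw [show -(max M (max (N:ℤ) (-(l+(s:ℤ))))) - 1 + 1 = -(max M (max (N:ℤ) (-(l+(s:ℤ)))))
          from by ring] at e
        rw [hd] at e
        have hz : u (-(max M (max (N:ℤ) (-(l+(s:ℤ))))) - 1 - 1) = 0 := hAU _ (Or.inr (by omega))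
        linarith
  refine ⟨⟨hexG, huniqG, hsolG⟩, ⟨hexD, huniqD, hsolD⟩, ?_, ?_⟩
  · intro Φ hΦ
    exact ⟨fun i hi => by rw [← hg i]; exact hΦ.1 i hi,
      fun i hi => by rw [← hg (i+1)]; exact hΦ.2 i hi⟩
  · intro Φ hΦ
    refine ⟨fun i hi => by rw [← hd i]; exact hΦ.1 i hi, fun i hi => ?_⟩
    have e := hΦ.2 i hi
    rw [hd (i+1), show i+1-1 = i from by ring] at e
    exact e
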